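/- Let X be an uncountable open Whyburn regular 𝒦-Lindelöf space. Then X has at most countably many isolated points. -/

import Mathlib

theorem isolated_points_countable_of_kLindelof {X : Type*} [TopologicalSpace X]
    [T1Space X] [RegularSpace X]
    (hunc : ¬ (Set.univ : Set X).Countable)
    (hW : ∀ A : Set X, IsOpen A → ∀ x ∈ closure A \ A,
      ∃ B : Set X, IsOpen B ∧ B ⊆ A ∧ closure B \ A = {x})
    (hKL : ∀ 𝒰 : Set (Set X), (∀ U ∈ 𝒰, IsOpen U) →
      (⋃ U ∈ 𝒰, closure U) = Set.univ →
      ∃ 𝒰' ⊆ 𝒰, 𝒰'.Countable ∧ (⋃ U ∈ 𝒰', closure U) = Set.univ) :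
    {x : X | IsOpen ({x} : Set X)}.Countable := by
  set D := {x : X | IsOpen ({x} : Set X)} with hDdef
  -- an isolated point in the closure of a set lies in the set
  have hiso : ∀ (U : Set X) (d : X), d ∈ D → d ∈ closure U → d ∈ U := by
    intro U d hd hdc
    obtain ⟨y, hy1, hy2⟩ := mem_closure_iff.mp hdc {d} hd rfl
    rwa [Set.mem_singleton_iff.mp hy1] at hy2
  have hDopen : IsOpen D := by
    have h : D = ⋃ d ∈ D, ({d} : Set X) := by
      ext y
      constructor
      · intro hy; exact Set.mem_biUnion hy rfl
      · intro hy
        obtain ⟨d, hd, hyd⟩ := Set.mem_iUnion₂.mp hy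
        exact Set.mem_singleton_iff.mp hyd ▸ hd
    rw [h]; exact isOpen_biUnion fun d hd => hd
  -- Key lemma via K-Lindelöf
  have lemA : ∀ E : Set X, E ⊆ D → closure E \ E ⊆ closure ((closure E)ᶜ) →
      E.Countable := by
    intro E hED hcov
    set 𝒰 : Set (Set X) := (fun b => ({b} : Set X)) '' E ∪ {(closure E)ᶜ} with h𝒰
    have hopen : ∀ U ∈ 𝒰, IsOpen U := by
      rintro U (⟨b, hb, rfl⟩ | hU)
      · exact hED hb
      · rw [Set.mem_singleton_iff.mp hU]
        exact isClosed_closure.isOpen_compl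
    have hcover : (⋃ U ∈ 𝒰, closure U) = Set.univ := by
      apply Set.eq_univ_of_forall
      intro y
      by_cases hyE : y ∈ E
      · refine Set.mem_biUnion (Or.inl ⟨y, hyE, rfl⟩) ?_
        rw [closure_singleton]; rfl
      · by_cases hyc : y ∈ closure E
        · exact Set.mem_biUnion (Or.inr rfl) (hcov ⟨hyc, hyE⟩)
        · exact Set.mem_biUnion (Or.inr rfl) (subset_closure hyc)
    obtain ⟨𝒰', hsub, hcnt, hcov'⟩ := hKL 𝒰 hopen hcover
    have hEsub : E ⊆ ⋃ U ∈ 𝒰', closure U ∩ E := by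
      intro b hb
      have : b ∈ ⋃ U ∈ 𝒰', closure U := hcov' ▸ Set.mem_univ b
      obtain ⟨U, hU, hbU⟩ := Set.mem_iUnion₂.mp this
      exact Set.mem_biUnion hU ⟨hbU, hb⟩
    refine Set.Countable.mono hEsub (hcnt.biUnion ?_)
    intro U hU
    rcases hsub hU with (⟨c, _, rfl⟩ | hUc)
    · exact (Set.countable_singleton c).mono (by rw [closure_singleton]; exact Set.inter_subset_left)
    · rw [Set.mem_singleton_iff.mp hUc]
      have : closure ((closure E)ᶜ) ∩ E = ∅ := by
        ext b
        simp only [Set.mem_inter_iff, Set.mem_empty_iff_false, iff_false, not_and]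
        intro hbc hbE
        exact (hiso _ b (hED hbE) hbc) (subset_closure hbE)
      rw [this]; exact Set.countable_empty
  -- splitting an uncountable set
  have hsplit : ∀ s : Set X, ¬ s.Countable →
      ∃ t, t ⊆ s ∧ ¬ t.Countable ∧ ¬ (s \ t).Countable := by
    intro s hs
    have hinf : s.Infinite := fun h => hs h.countable
    have hinf2 : Infinite ↥s := hinf.to_subtype
    have hemb : Nonempty (↥s ⊕ ↥s ↪ ↥s) := by
      rw [← Cardinal.le_def, Cardinal.mk_sum]
      simp only [Cardinal.lift_id]
      exact (Cardinal.add_eq_self (Cardinal.aleph0_le_mk ↥s)).le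
    obtain ⟨f⟩ := hemb
    refine ⟨Set.range (fun a : ↥s => (f (Sum.inl a) : X)), ?_, ?_, ?_⟩
    · rintro _ ⟨a, rfl⟩; exact (f (Sum.inl a)).2
    · intro hc
      have : Countable ↥(Set.range (fun a : ↥s => (f (Sum.inl a) : X))) :=
        hc.to_subtype
      have hginj : Function.Injective
          (fun a : ↥s => (⟨(f (Sum.inl a) : X), Set.mem_range_self a⟩ :
            ↥(Set.range (fun a : ↥s => (f (Sum.inl a) : X))))) := by
        intro a b hab
        have := congrArg Subtype.val hab
        exact Sum.inl.inj (f.injective (Subtype.ext this))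
      have : Countable ↥s := hginj.countable
      exact hs (Set.countable_coe_iff.mpr this)
    · intro hc
      have hmem : ∀ a : ↥s, (f (Sum.inr a) : X) ∈
          s \ Set.range (fun a : ↥s => (f (Sum.inl a) : X)) := by
        intro a
        refine ⟨(f (Sum.inr a)).2, ?_⟩
        rintro ⟨b, hb⟩
        have : f (Sum.inl b) = f (Sum.inr a) := Subtype.ext hb
        exact Sum.inl_ne_inr (f.injective this)
      have : Countable ↥(s \ Set.range (fun a : ↥s => (f (Sum.inl a) : X))) :=
        hc.to_subtype
      have hginj : Function.Injective (fun a : ↥s =>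
          (⟨(f (Sum.inr a) : X), hmem a⟩ :
            ↥(s \ Set.range (fun a : ↥s => (f (Sum.inl a) : X))))) := by
        intro a b hab
        have := congrArg Subtype.val hab
        exact Sum.inr.inj (f.injective (Subtype.ext this))
      have : Countable ↥s := hginj.countable
      exact hs (Set.countable_coe_iff.mpr this)
  -- main argument
  by_contra hDunc
  set 𝒰₀ : Set (Set X) := {U : Set X | IsOpen U ∧ (closure U ∩ D).Countable} with h𝒰₀
  have hxex : ∃ x : X, ∀ U ∈ 𝒰₀, x ∉ closure U := by
    by_contra h
    push_neg at h
    have hcov : (⋃ U ∈ 𝒰₀, closure U) = Set.univ := by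
      apply Set.eq_univ_of_forall
      intro y
      obtain ⟨U, hU, hy⟩ := h y
      exact Set.mem_biUnion hU hy
    obtain ⟨𝒰', hsub, hcnt, hcov'⟩ := hKL 𝒰₀ (fun U hU => hU.1) hcov
    apply hDunc
    have hDsub : D ⊆ ⋃ U ∈ 𝒰', closure U ∩ D := by
      intro d hd
      have : d ∈ ⋃ U ∈ 𝒰', closure U := hcov' ▸ Set.mem_univ d
      obtain ⟨U, hU, hdU⟩ := Set.mem_iUnion₂.mp this
      exact Set.mem_biUnion hU ⟨hdU, hd⟩
    exact Set.Countable.mono hDsub (hcnt.biUnion fun U hU => (hsub hU).2)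
  obtain ⟨x, hx⟩ := hxex
  -- x is not isolated
  have hxD : x ∉ D := by
    intro hxD
    exact hx {x} ⟨hxD, (Set.countable_singleton x).mono
      (by rw [closure_singleton]; exact Set.inter_subset_left)⟩
      (subset_closure rfl)
  -- x ∈ closure D
  have hxcD : x ∈ closure D := by
    by_contra hxc
    refine hx (closure D)ᶜ ⟨isClosed_closure.isOpen_compl, ?_⟩ (subset_closure hxc)
    have : closure ((closure D)ᶜ) ∩ D = ∅ := by
      ext d
      simp only [Set.mem_inter_iff, Set.mem_empty_iff_false, iff_false, not_and]
      intro hdc hdD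
      exact (hiso _ d hdD hdc) (subset_closure hdD)
    rw [this]; exact Set.countable_empty
  obtain ⟨B, hBo, hBD, hBcl⟩ := hW D hDopen x ⟨hxcD, hxD⟩
  have hxB : x ∈ closure B := by
    have : x ∈ closure B \ D := hBcl ▸ rfl
    exact this.1
  set C : Set X := closure B ∩ D with hCdef
  have hCD : C ⊆ D := Set.inter_subset_right
  have hCunc : ¬ C.Countable := fun hc => hx B ⟨hBo, hc⟩ hxB
  have hclBC : closure B ⊆ C ∪ {x} := by
    intro y hy
    by_cases hyD : y ∈ D
    · exact Or.inl ⟨hy, hyD⟩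
    · right
      have : y ∈ closure B \ D := ⟨hy, hyD⟩
      rw [hBcl] at this; exact this
  have hclC : closure C = closure B := by
    apply le_antisymm
    · exact closure_minimal Set.inter_subset_left isClosed_closure
    · have hBC : B ⊆ C := fun b hb => ⟨subset_closure hb, hBD hb⟩
      exact closure_mono hBC
  -- split C into two uncountable pieces
  obtain ⟨C₁, hC₁C, hC₁unc, hC₂unc⟩ := hsplit C hCunc
  set C₂ : Set X := C \ C₁ with hC₂def
  have hC₂C : C₂ ⊆ C := Set.diff_subset
  have hCun : C = C₁ ∪ C₂ := by
    rw [hC₂def, Set.union_diff_cancel' (le_refl C₁) hC₁C]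
  -- key symmetric step
  have key : ∀ s t : Set X, s ⊆ C → t ⊆ C → (∀ y ∈ s, y ∉ t) → x ∈ closure s →
      t.Countable := by
    intro s t hsC htC hdisj hxs
    refine lemA t (fun y hy => hCD (htC hy)) ?_
    intro y ⟨hy1, hy2⟩
    have hyx : y = x := by
      have hyC : y ∈ closure C := closure_mono htC hy1
      rw [hclC] at hyC
      rcases hclBC hyC with hyCmem | hyx
      · exact absurd (hiso t y (hCD hyCmem) hy1) hy2
      · exact hyx
    subst hyx
    have hs_sub : s ⊆ (closure t)ᶜ := by
      intro z hz hzc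
      exact hdisj z hz (hiso t z (hCD (hsC hz)) hzc)
    exact closure_mono hs_sub hxs
  have hxC : x ∈ closure C₁ ∪ closure C₂ := by
    rw [← closure_union, ← hCun, hclC]; exact hxB
  rcases hxC with hx1 | hx2
  · exact hC₂unc (key C₁ C₂ hC₁C hC₂C (fun y hy hyt => hyt.2 hy) hx1)
  · exact hC₁unc (key C₂ C₁ hC₂C hC₁C (fun y hy hyt => hy.2 hyt) hx2)
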